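/- Let (Σ,σ) be a primitive Markov subshift on a countable alphabet and let A : Σ → ℝ be a bounded above potential with summable variations satisfying inf A|_{⋃_{i∈F}[i]} > −∞. Then the function u_A(x) = sup{S_k(A − β_A)(y) : k ≥ 0, y ∈ Σ, σ^k(y) = x} is a minimal, nonnegative, bounded sub-action for A, and it satisfies Var_k(u_A) ≤ Σ_{j≥k} Var_j(A) for all k ≥ 1; in particular u_A is uniformly continuous. -/

import Mathlib

open MeasureTheory Filter Topology Set

/-- Membership in the Markov shift: admissible transitions at every coordinate. -/
def InShift (M : ℕ → ℕ → Bool) (x : ℕ → ℕ) : Prop := ∀ j, M (x j) (x (j+1)) = true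

/-- The one-sided countable Markov shift `Σ` associated to the transition matrix `M`,
as a subtype of `ℕ → ℕ` (with the product topology, which is the topology induced by
the metric `d(x,y) = λ^{min{j : x_j ≠ y_j}}`). -/
abbrev ShiftSpace (M : ℕ → ℕ → Bool) := {x : ℕ → ℕ // InShift M x}

/-- The left shift map `σ`. -/
def shiftMap (M : ℕ → ℕ → Bool) (x : ShiftSpace M) : ShiftSpace M :=
  ⟨fun j => x.1 (j+1), fun j => x.2 (j+1)⟩

/-- `Agree M k x y` means the points `x, y` coincide on the first `k` coordinates;
for `k ≥ 1` this is exactly `d(x,y) ≤ λ^k` for the metric of the paper. -/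
def Agree (M : ℕ → ℕ → Bool) (k : ℕ) (x y : ShiftSpace M) : Prop :=
  ∀ j < k, x.1 j = y.1 j

/-- The sets `B_n` of symbols admitting admissible words of length `n+1` starting at them. -/
def BSet (M : ℕ → ℕ → Bool) : ℕ → Set ℕ
  | 0 => {i | ∃ j, M i j = true}
  | n+1 => {i | ∃ j ∈ BSet M n, M i j = true}

/-- `⋂_{n ≥ 0} B_n`. -/
def BInf (M : ℕ → ℕ → Bool) : Set ℕ := ⋂ n, BSet M n

/-- `M` is primitive with connecting set `F` and connection length `K₀`: any two symbols
of `⋂ B_n` can be joined by an admissible word of length `K₀` with all letters in `F`. -/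
def Primitive (M : ℕ → ℕ → Bool) (F : Set ℕ) (K₀ : ℕ) : Prop :=
  ∀ i ∈ BInf M, ∀ j ∈ BInf M, ∃ p : ℕ → ℕ,
    p 0 = i ∧ p (K₀ + 1) = j ∧ (∀ t, 1 ≤ t → t ≤ K₀ → p t ∈ F) ∧
    (∀ t ≤ K₀, M (p t) (p (t+1)) = true)

/-- `A` is locally Hölder continuous with constant `H`:
`Var_k(A) ≤ H ⬝ λ^k` for every `k ≥ 1`. -/
def LocHolder (M : ℕ → ℕ → Bool) (lam H : ℝ) (A : ShiftSpace M → ℝ) : Prop :=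
  ∀ k : ℕ, 1 ≤ k → ∀ x y : ShiftSpace M, Agree M k x y → A x - A y ≤ H * lam ^ k

/-- `A` is coercive: `sup A|_{[i]} → -∞` as `i → ∞`. -/
def Coercive (M : ℕ → ℕ → Bool) (A : ShiftSpace M → ℝ) : Prop :=
  ∀ C : ℝ, ∃ N : ℕ, ∀ i : ℕ, N ≤ i → ∀ x : ShiftSpace M, x.1 0 = i → A x ≤ C

/-- The union of cylinders `⋃_{i ∈ F} [i]`. -/
def FCyl (M : ℕ → ℕ → Bool) (F : Set ℕ) : Set (ShiftSpace M) := {x | x.1 0 ∈ F}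

/-- `μ` is a `σ`-invariant Borel probability measure. -/
def InvProb (M : ℕ → ℕ → Bool) (μ : Measure (ShiftSpace M)) : Prop :=
  IsProbabilityMeasure μ ∧ μ.map (shiftMap M) = μ

/-- The ergodic maximizing value `β_A = sup {∫ A dμ : μ ∈ M_σ}`. -/
noncomputable def betaA (M : ℕ → ℕ → Bool) (A : ShiftSpace M → ℝ) : ℝ :=
  sSup {r | ∃ μ : Measure (ShiftSpace M), InvProb M μ ∧ Integrable A μ ∧ ∫ x, A x ∂μ = r}

/-- The compact subshift `Σ_I` on the finite alphabet `{0, …, I}`. -/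
def SpaceI (M : ℕ → ℕ → Bool) (I : ℕ) : Set (ShiftSpace M) := {x | ∀ j, x.1 j ≤ I}

/-- `β_A(I) = max {∫ A dμ : μ ∈ M_σ, supp μ ⊆ Σ_I}`. -/
noncomputable def betaAI (M : ℕ → ℕ → Bool) (A : ShiftSpace M → ℝ) (I : ℕ) : ℝ :=
  sSup {r | ∃ μ : Measure (ShiftSpace M), InvProb M μ ∧ μ (SpaceI M I) = 1 ∧
    Integrable A μ ∧ ∫ x, A x ∂μ = r}

/-- Birkhoff sum `S_k A`. -/
noncomputable def birkhoff (M : ℕ → ℕ → Bool) (A : ShiftSpace M → ℝ) (k : ℕ)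
    (x : ShiftSpace M) : ℝ :=
  ∑ j ∈ Finset.range k, A ((shiftMap M)^[j] x)

/-- The `k`-th variation `Var_k(A)`. -/
noncomputable def VarK (M : ℕ → ℕ → Bool) (A : ShiftSpace M → ℝ) (k : ℕ) : ℝ :=
  sSup {r | ∃ x y : ShiftSpace M, Agree M k x y ∧ A x - A y = r}

/-- `Var(A) = ∑_{k ≥ 1} Var_k(A)`. -/
noncomputable def VarSum (M : ℕ → ℕ → Bool) (A : ShiftSpace M → ℝ) : ℝ :=
  ∑' k : ℕ, VarK M A (k + 1)

/-- `sup A`. -/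
noncomputable def supA (M : ℕ → ℕ → Bool) (A : ShiftSpace M → ℝ) : ℝ :=
  sSup (Set.range A)

/-- `inf A|_{⋃_{i ∈ F} [i]}`. -/
noncomputable def infF (M : ℕ → ℕ → Bool) (F : Set ℕ) (A : ShiftSpace M → ℝ) : ℝ :=
  sInf (A '' FCyl M F)

/-- The defining set for `u_A(x)`: all values `S_k(A - β_A)(y)` with `σ^k(y) = x`. -/
noncomputable def uASet (M : ℕ → ℕ → Bool) (A : ShiftSpace M → ℝ) (x : ShiftSpace M) :
    Set ℝ :=
  {r | ∃ (k : ℕ) (y : ShiftSpace M), (shiftMap M)^[k] y = x ∧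
    birkhoff M A k y - k * betaA M A = r}

/-- The candidate minimal sub-action
`u_A(x) = sup {S_k(A - β_A)(y) : k ≥ 0, σ^k(y) = x}`. -/
noncomputable def uA (M : ℕ → ℕ → Bool) (A : ShiftSpace M → ℝ) (x : ShiftSpace M) : ℝ :=
  sSup (uASet M A x)

/-- The non-wandering set `Ω(A, I)` with respect to `A|_{Σ_I}`. -/
def NonWandering (M : ℕ → ℕ → Bool) (A : ShiftSpace M → ℝ) (I : ℕ) :
    Set (ShiftSpace M) :=
  {x | x ∈ SpaceI M I ∧ ∀ ε : ℝ, 0 < ε → ∀ m : ℕ,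
    ∃ y ∈ SpaceI M I, ∃ n : ℕ, 1 ≤ n ∧ Agree M m x y ∧
      Agree M m x ((shiftMap M)^[n] y) ∧
      |birkhoff M A n y - n * betaAI M A I| < ε}

namespace UAProof
open scoped ENNReal

variable {M : ℕ → ℕ → Bool}

lemma iter_apply (x : ShiftSpace M) (i j : ℕ) :
    ((shiftMap M)^[i] x).1 j = x.1 (j + i) := by
  induction i generalizing j with
  | zero => rfl
  | succ i ih =>
    rw [Function.iterate_succ_apply']
    show ((shiftMap M)^[i] x).1 (j + 1) = x.1 (j + (i + 1))
    rw [ih]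
    have e : j + 1 + i = j + (i + 1) := by omega
    rw [e]

lemma measurable_shiftMap : Measurable (shiftMap M) := by
  have h : Measurable fun (x : ShiftSpace M) => (fun j => x.1 (j+1) : ℕ → ℕ) :=
    measurable_pi_lambda _ fun j => (measurable_pi_apply (j+1)).comp measurable_subtype_coe
  exact h.subtype_mk

lemma symbol_mem_BSet (x : ShiftSpace M) : ∀ n j, x.1 j ∈ BSet M n := by
  intro n
  induction n with
  | zero => exact fun j => ⟨x.1 (j+1), x.2 j⟩
  | succ n ih => exact fun j => ⟨x.1 (j+1), ih (j+1), x.2 j⟩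

lemma symbol_mem_BInf (x : ShiftSpace M) (j : ℕ) : x.1 j ∈ BInf M :=
  Set.mem_iInter.2 fun n => symbol_mem_BSet x n j

lemma betaA_set_bddAbove (A : ShiftSpace M → ℝ) (hbdd : BddAbove (Set.range A)) :
    BddAbove {r | ∃ μ : Measure (ShiftSpace M), InvProb M μ ∧ Integrable A μ ∧ ∫ x, A x ∂μ = r} := by
  refine ⟨sSup (Set.range A), ?_⟩
  rintro r ⟨μ, ⟨hprob, _⟩, hint, rfl⟩
  haveI := hprob
  calc ∫ x, A x ∂μ ≤ ∫ _, sSup (Set.range A) ∂μ :=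
        integral_mono hint (integrable_const _) fun w => le_csSup hbdd ⟨w, rfl⟩
    _ = sSup (Set.range A) := by simp

lemma periodic_le_beta (A : ShiftSpace M → ℝ) (hbdd : BddAbove (Set.range A))
    (z : ShiftSpace M) (n : ℕ) (hn : 1 ≤ n) (hz : (shiftMap M)^[n] z = z) :
    birkhoff M A n z ≤ n * betaA M A := by
  classical
  have hne : (n : ℝ≥0∞) ≠ 0 := by exact_mod_cast Nat.one_le_iff_ne_zero.mp hn
  set ν : Measure (ShiftSpace M) :=
    ∑ i ∈ Finset.range n, Measure.dirac ((shiftMap M)^[i] z) with hν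
  set μ : Measure (ShiftSpace M) := ((n : ℝ≥0∞))⁻¹ • ν with hμ
  have hprob : IsProbabilityMeasure μ := by
    constructor
    rw [hμ, Measure.smul_apply, hν, Measure.finset_sum_apply]
    have h1 : ∀ i ∈ Finset.range n,
        (Measure.dirac ((shiftMap M)^[i] z)) Set.univ = 1 := by simp
    rw [Finset.sum_congr rfl h1]
    simp [ENNReal.inv_mul_cancel hne]
  set Fz : Finset (ShiftSpace M) :=
    (Finset.range n).image (fun i => (shiftMap M)^[i] z) with hFz
  set g : ShiftSpace M → ℝ := fun w => ∑ a ∈ Fz, if w = a then A a else 0 with hg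
  have hg_eq : ∀ w ∈ Fz, g w = A w := by
    intro w hw
    rw [hg]
    simp only
    rw [Finset.sum_ite_eq Fz w A, if_pos hw]
  have hg_meas : Measurable g := by
    apply Finset.measurable_sum
    intro a _
    have hms : MeasurableSet {w : ShiftSpace M | w = a} := by
      rw [Set.setOf_eq_eq_singleton]; exact measurableSet_singleton a
    exact Measurable.ite hms measurable_const measurable_const
  have hIg : ∀ i : ℕ, Integrable g (Measure.dirac ((shiftMap M)^[i] z)) := by
    intro i
    refine ⟨hg_meas.aestronglyMeasurable, ?_⟩
    simp [HasFiniteIntegral, lintegral_dirac]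
  have hFzc : μ ((↑Fz : Set (ShiftSpace M))ᶜ) = 0 := by
    rw [hμ, Measure.smul_apply, hν, Measure.finset_sum_apply]
    have h1 : ∀ i ∈ Finset.range n,
        (Measure.dirac ((shiftMap M)^[i] z)) ((↑Fz : Set (ShiftSpace M))ᶜ) = 0 := by
      intro i hi
      rw [Measure.dirac_apply]
      apply Set.indicator_of_notMem
      simp only [Set.mem_compl_iff, Finset.mem_coe, not_not]
      exact Finset.mem_image.2 ⟨i, hi, rfl⟩
    rw [Finset.sum_congr rfl h1]
    simp
  have hAg : A =ᵐ[μ] g := by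
    rw [Filter.EventuallyEq, ae_iff]
    refine measure_mono_null ?_ hFzc
    intro w hw
    simp only [Set.mem_setOf_eq] at hw
    simp only [Set.mem_compl_iff, Finset.mem_coe]
    intro hmem
    exact hw (hg_eq w hmem).symm
  have hint_g : Integrable g μ := by
    rw [hμ]
    refine Integrable.smul_measure ?_ (by simp [Nat.one_le_iff_ne_zero.mp hn])
    rw [hν, integrable_finset_sum_measure]
    exact fun i _ => hIg i
  have hintA : Integrable A μ := (integrable_congr hAg).2 hint_g
  have hInt_eq : ∫ x, A x ∂μ = (n : ℝ)⁻¹ * birkhoff M A n z := by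
    rw [integral_congr_ae hAg, hμ, integral_smul_measure, hν,
      integral_finset_sum_measure (fun i _ => hIg i)]
    simp only [integral_dirac]
    have h1 : ∀ i ∈ Finset.range n,
        g ((shiftMap M)^[i] z) = A ((shiftMap M)^[i] z) := fun i hi =>
      hg_eq _ (Finset.mem_image.2 ⟨i, hi, rfl⟩)
    rw [Finset.sum_congr rfl h1, birkhoff]
    simp [ENNReal.toReal_inv, smul_eq_mul]
  have hinv : μ.map (shiftMap M) = μ := by
    rw [hμ, Measure.map_smul]
    congr 1
    refine Measure.ext fun s hs => ?_
    rw [Measure.map_apply measurable_shiftMap hs, hν, Measure.finset_sum_apply,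
      Measure.finset_sum_apply]
    have step : ∀ i : ℕ, (Measure.dirac ((shiftMap M)^[i] z)) (shiftMap M ⁻¹' s)
        = (Measure.dirac ((shiftMap M)^[i+1] z)) s := by
      intro i
      rw [Measure.dirac_apply, Measure.dirac_apply]
      simp [Set.indicator_apply, Set.mem_preimage, Function.iterate_succ_apply']
    rw [Finset.sum_congr rfl (fun i _ => step i)]
    set f : ℕ → ℝ≥0∞ := fun i => (Measure.dirac ((shiftMap M)^[i] z)) s with hf
    have h0 : f n = f 0 := by rw [hf]; simp [hz]
    have h1 : (∑ i ∈ Finset.range n, f (i+1)) + f 0 = (∑ i ∈ Finset.range n, f i) + f 0 := by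
      rw [← Finset.sum_range_succ' f n, Finset.sum_range_succ, h0]
    exact WithTop.add_right_cancel (measure_ne_top _ _) h1
  have hmem : (n:ℝ)⁻¹ * birkhoff M A n z ∈
      {r | ∃ μ' : Measure (ShiftSpace M), InvProb M μ' ∧ Integrable A μ' ∧ ∫ x, A x ∂μ' = r} :=
    ⟨μ, ⟨hprob, hinv⟩, hintA, hInt_eq⟩
  have hle : (n:ℝ)⁻¹ * birkhoff M A n z ≤ betaA M A :=
    le_csSup (betaA_set_bddAbove A hbdd) hmem
  have hn' : (0:ℝ) < n := by exact_mod_cast hn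
  calc birkhoff M A n z = n * ((n:ℝ)⁻¹ * birkhoff M A n z) := by field_simp
    _ ≤ n * betaA M A := mul_le_mul_of_nonneg_left hle hn'.le

lemma VarK_nonneg (A : ShiftSpace M → ℝ)
    (hvarbdd : ∀ k : ℕ, 1 ≤ k →
      BddAbove {r : ℝ | ∃ x y : ShiftSpace M, Agree M k x y ∧ A x - A y = r})
    (k : ℕ) (hk : 1 ≤ k) : 0 ≤ VarK M A k := by
  rcases isEmpty_or_nonempty (ShiftSpace M) with h | hne
  · have he : {r : ℝ | ∃ x y : ShiftSpace M, Agree M k x y ∧ A x - A y = r} = ∅ := by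
      ext r
      simp only [Set.mem_setOf_eq, Set.mem_empty_iff_false, iff_false, not_exists]
      exact fun x => (h.false x).elim
    rw [VarK, he, Real.sSup_empty]
  · obtain ⟨x⟩ := hne
    exact le_csSup (hvarbdd k hk) ⟨x, x, fun _ _ => rfl, sub_self _⟩

lemma le_VarK (A : ShiftSpace M → ℝ)
    (hvarbdd : ∀ k : ℕ, 1 ≤ k →
      BddAbove {r : ℝ | ∃ x y : ShiftSpace M, Agree M k x y ∧ A x - A y = r})
    (k : ℕ) (hk : 1 ≤ k) (x y : ShiftSpace M) (h : Agree M k x y) :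
    A x - A y ≤ VarK M A k :=
  le_csSup (hvarbdd k hk) ⟨x, y, h, rfl⟩

lemma key_bound (F : Set ℕ) (K₀ : ℕ) (hprim : Primitive M F K₀)
    (A : ShiftSpace M → ℝ)
    (hbdd : BddAbove (Set.range A))
    (hbelow : BddBelow (A '' FCyl M F))
    (hvarbdd : ∀ k : ℕ, 1 ≤ k →
      BddAbove {r : ℝ | ∃ x y : ShiftSpace M, Agree M k x y ∧ A x - A y = r})
    (hsum : Summable (fun k : ℕ => VarK M A (k + 1)))
    (k : ℕ) (hk : 1 ≤ k) (y : ShiftSpace M) :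
    birkhoff M A k y - k * betaA M A ≤ K₀ * (betaA M A - infF M F A) + VarSum M A := by
  classical
  obtain ⟨p, hp0, hpK, hpF, hpM⟩ :=
    hprim (y.1 (k-1)) (symbol_mem_BInf y (k-1)) (y.1 0) (symbol_mem_BInf y 0)
  set n := k + K₀ with hn
  have hn1 : 1 ≤ n := le_trans hk (Nat.le_add_right k K₀)
  set w : ℕ → ℕ := fun t => if t < k then y.1 t else p (t - k + 1) with hw
  have hstep : ∀ t, t + 1 < n → M (w t) (w (t+1)) = true := by
    intro t ht
    by_cases h1 : t + 1 < k
    · rw [hw]; simp only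
      rw [if_pos (by omega), if_pos h1]; exact y.2 t
    · by_cases h2 : t < k
      · have ht' : t = k - 1 := by omega
        rw [hw]; simp only
        rw [if_pos h2, if_neg h1]
        have e1 : t + 1 - k + 1 = 1 := by omega
        rw [e1, ht']
        have h3 := hpM 0 (Nat.zero_le _)
        rw [hp0] at h3
        exact h3
      · rw [hw]; simp only
        rw [if_neg (by omega), if_neg (by omega)]
        have e : t + 1 - k + 1 = (t - k + 1) + 1 := by omega
        rw [e]
        exact hpM (t - k + 1) (by omega)
  have hw0 : w 0 = y.1 0 := by rw [hw]; simp only; rw [if_pos (by omega)]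
  have hwrap : M (w (n-1)) (w 0) = true := by
    rw [hw0]
    by_cases hK : K₀ = 0
    · have hwn : w (n-1) = y.1 (k-1) := by
        rw [hw]; simp only; rw [if_pos (by omega)]
        have e : n - 1 = k - 1 := by omega
        rw [e]
      rw [hwn]
      have h3 := hpM 0 (Nat.zero_le _)
      rw [hp0] at h3
      have h4 : p (0+1) = y.1 0 := by rw [← hpK]; congr 1; omega
      rw [h4] at h3
      exact h3
    · have hwn : w (n-1) = p K₀ := by
        rw [hw]; simp only; rw [if_neg (by omega)]
        have e : n - 1 - k + 1 = K₀ := by omega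
        rw [e]
      rw [hwn, ← hpK]
      exact hpM K₀ le_rfl
  have keytrans : ∀ t, t < n → M (w t) (w ((t+1) % n)) = true := by
    intro t ht
    rcases Nat.lt_or_ge (t+1) n with h | h
    · rw [Nat.mod_eq_of_lt h]; exact hstep t h
    · have ht1 : t + 1 = n := by omega
      have ht2 : t = n - 1 := by omega
      rw [ht1, Nat.mod_self, ht2]
      exact hwrap
  have hz_in : InShift M (fun j => w (j % n)) := by
    intro j
    have hmd := Nat.mod_add_div' j n
    have e : j + 1 = (j % n + 1) + (j / n) * n := by omega
    simp only
    rw [e, Nat.add_mul_mod_self_right]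
    exact keytrans (j % n) (Nat.mod_lt _ (by omega))
  set z : ShiftSpace M := ⟨fun j => w (j % n), hz_in⟩ with hzdef
  have hz1 : ∀ j, z.1 j = w (j % n) := fun j => rfl
  have hzp : (shiftMap M)^[n] z = z := by
    apply Subtype.ext
    funext j
    rw [iter_apply, hz1, hz1, Nat.add_mod_right]
  have hzy : ∀ j, j < k → z.1 j = y.1 j := by
    intro j hj
    rw [hz1, Nat.mod_eq_of_lt (by omega), hw]
    simp only
    rw [if_pos hj]
  -- birkhoff M A k y ≤ birkhoff M A k z + VarSum M A
  have hsum1 : birkhoff M A k y ≤ birkhoff M A k z + VarSum M A := by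
    have each : ∀ i ∈ Finset.range k,
        A ((shiftMap M)^[i] y) - A ((shiftMap M)^[i] z) ≤ VarK M A (k - i) := by
      intro i hi
      have hik : i < k := Finset.mem_range.mp hi
      refine le_VarK A hvarbdd (k - i) (by omega) _ _ ?_
      intro j hj
      rw [iter_apply, iter_apply, hzy (j+i) (by omega)]
    have h1 : birkhoff M A k y - birkhoff M A k z
        ≤ ∑ i ∈ Finset.range k, VarK M A (k - i) := by
      rw [birkhoff, birkhoff, ← Finset.sum_sub_distrib]
      exact Finset.sum_le_sum each
    have h2 : ∑ i ∈ Finset.range k, VarK M A (k - i)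
        = ∑ i ∈ Finset.range k, VarK M A (i + 1) := by
      rw [← Finset.sum_range_reflect (fun i => VarK M A (i + 1)) k]
      apply Finset.sum_congr rfl
      intro i hi
      have : k - 1 - i + 1 = k - i := by
        have := Finset.mem_range.mp hi; omega
      rw [this]
    have h3 : ∑ i ∈ Finset.range k, VarK M A (i + 1) ≤ VarSum M A := by
      rw [VarSum]
      exact Summable.sum_le_tsum _ (fun i _ => VarK_nonneg A hvarbdd (i+1) (by omega)) hsum
    linarith
  -- birkhoff M A k z + K₀ * infF ≤ birkhoff M A n z
  have hsum2 : birkhoff M A k z + K₀ * infF M F A ≤ birkhoff M A n z := by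
    have hsplit : birkhoff M A n z
        = birkhoff M A k z + ∑ i ∈ Finset.Ico k n, A ((shiftMap M)^[i] z) := by
      rw [birkhoff, birkhoff, Finset.range_eq_Ico,
        ← Finset.sum_Ico_consecutive _ (Nat.zero_le k) (by omega : k ≤ n), Finset.range_eq_Ico]
    have each : ∀ i ∈ Finset.Ico k n, infF M F A ≤ A ((shiftMap M)^[i] z) := by
      intro i hi
      obtain ⟨hik, hin⟩ := Finset.mem_Ico.mp hi
      apply csInf_le hbelow
      refine ⟨(shiftMap M)^[i] z, ?_, rfl⟩
      show ((shiftMap M)^[i] z).1 0 ∈ F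
      rw [iter_apply, hz1, Nat.mod_eq_of_lt (by omega), hw]
      simp only
      rw [if_neg (by omega)]
      exact hpF (0 + i - k + 1) (by omega) (by omega)
    have h4 : (K₀ : ℝ) * infF M F A ≤ ∑ i ∈ Finset.Ico k n, A ((shiftMap M)^[i] z) := by
      calc (K₀ : ℝ) * infF M F A = ∑ _i ∈ Finset.Ico k n, infF M F A := by
            rw [Finset.sum_const, Nat.card_Ico]
            have : n - k = K₀ := by omega
            rw [this, nsmul_eq_mul]
        _ ≤ _ := Finset.sum_le_sum each
    linarith
  have hper : birkhoff M A n z ≤ n * betaA M A := periodic_le_beta A hbdd z n hn1 hzp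
  have hcast : (n : ℝ) = (k : ℝ) + (K₀ : ℝ) := by rw [hn]; push_cast; ring
  have := hper
  rw [hcast] at this
  linarith

lemma birkhoff_succ (A : ShiftSpace M → ℝ) (m : ℕ) (y : ShiftSpace M) :
    birkhoff M A (m+1) y = birkhoff M A m y + A ((shiftMap M)^[m] y) := by
  rw [birkhoff, birkhoff]
  exact Finset.sum_range_succ _ m

lemma zero_mem_uASet (A : ShiftSpace M → ℝ) (x : ShiftSpace M) :
    (0:ℝ) ∈ uASet M A x :=
  ⟨0, x, rfl, by simp [birkhoff]⟩

lemma uASet_le (F : Set ℕ) (K₀ : ℕ) (hprim : Primitive M F K₀)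
    (A : ShiftSpace M → ℝ)
    (hbdd : BddAbove (Set.range A))
    (hbelow : BddBelow (A '' FCyl M F))
    (hvarbdd : ∀ k : ℕ, 1 ≤ k →
      BddAbove {r : ℝ | ∃ x y : ShiftSpace M, Agree M k x y ∧ A x - A y = r})
    (hsum : Summable (fun k : ℕ => VarK M A (k + 1)))
    (x : ShiftSpace M) :
    ∀ r ∈ uASet M A x, r ≤ max 0 (K₀ * (betaA M A - infF M F A) + VarSum M A) := by
  rintro r ⟨k, y, -, rfl⟩
  rcases Nat.eq_zero_or_pos k with hk | hk
  · subst hk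
    simp only [birkhoff, Finset.range_zero, Finset.sum_empty, Nat.cast_zero, zero_mul, sub_zero]
    exact le_max_left _ _
  · exact le_trans (key_bound F K₀ hprim A hbdd hbelow hvarbdd hsum k hk y) (le_max_right _ _)

lemma item6 (A : ShiftSpace M → ℝ)
    (hvarbdd : ∀ k : ℕ, 1 ≤ k →
      BddAbove {r : ℝ | ∃ x y : ShiftSpace M, Agree M k x y ∧ A x - A y = r})
    (hsum : Summable (fun k : ℕ => VarK M A (k + 1)))
    (hbddset : ∀ x : ShiftSpace M, BddAbove (uASet M A x))
    (k : ℕ) (hk : 1 ≤ k) (x y : ShiftSpace M) (hxy : Agree M k x y) :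
    uA M A x - uA M A y ≤ ∑' j : ℕ, VarK M A (k + j) := by
  have hg_summable : Summable (fun j : ℕ => VarK M A (k + j)) := by
    have h1 := (summable_nat_add_iff (k-1)).2 hsum
    refine h1.congr ?_
    intro n; congr 1; omega
  have hstep : ∀ r ∈ uASet M A x, r ≤ uA M A y + ∑' j : ℕ, VarK M A (k + j) := by
    rintro r ⟨m, wpt, hσ, rfl⟩
    have hw'in : InShift M (fun j => if j < m then wpt.1 j else y.1 (j - m)) := by
      intro j
      simp only
      by_cases h1 : j + 1 < m
      · rw [if_pos (by omega), if_pos h1]; exact wpt.2 j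
      · by_cases h2 : j < m
        · rw [if_pos h2, if_neg h1]
          have e : j + 1 - m = 0 := by omega
          rw [e]
          have h3 : x.1 0 = wpt.1 m := by
            rw [← hσ, iter_apply, Nat.zero_add]
          have e2 : y.1 0 = wpt.1 (j+1) := by
            rw [← hxy 0 (by omega), h3]
            have e3 : m = j + 1 := by omega
            rw [e3]
          rw [e2]; exact wpt.2 j
        · rw [if_neg h2, if_neg h1]
          have e : j + 1 - m = (j - m) + 1 := by omega
          rw [e]; exact y.2 (j - m)
    set w' : ShiftSpace M := ⟨_, hw'in⟩ with hw'def
    have hσ' : (shiftMap M)^[m] w' = y := by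
      apply Subtype.ext; funext j
      rw [iter_apply]
      show (if j + m < m then wpt.1 (j+m) else y.1 (j + m - m)) = y.1 j
      rw [if_neg (by omega)]
      have e : j + m - m = j := by omega
      rw [e]
    have each : ∀ i ∈ Finset.range m,
        A ((shiftMap M)^[i] wpt) - A ((shiftMap M)^[i] w') ≤ VarK M A (m - i + k) := by
      intro i hi
      have him : i < m := Finset.mem_range.mp hi
      refine le_VarK A hvarbdd _ (by omega) _ _ ?_
      intro j hj
      rw [iter_apply, iter_apply]
      show wpt.1 (j + i) = (if j + i < m then wpt.1 (j+i) else y.1 (j + i - m))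
      by_cases h1 : j + i < m
      · rw [if_pos h1]
      · rw [if_neg h1]
        have h3 : y.1 (j + i - m) = x.1 (j + i - m) := (hxy _ (by omega)).symm
        rw [h3, ← hσ, iter_apply]
        have e : j + i - m + m = j + i := by omega
        rw [e]
    have hbk : birkhoff M A m wpt - birkhoff M A m w'
        ≤ ∑ i ∈ Finset.range m, VarK M A (m - i + k) := by
      rw [birkhoff, birkhoff, ← Finset.sum_sub_distrib]
      exact Finset.sum_le_sum each
    have h2 : ∑ i ∈ Finset.range m, VarK M A (m - i + k)
        = ∑ i ∈ Finset.range m, VarK M A (k + (i+1)) := by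
      rw [← Finset.sum_range_reflect (fun i => VarK M A (k + (i+1))) m]
      apply Finset.sum_congr rfl
      intro i hi
      have hi' := Finset.mem_range.mp hi
      congr 1; omega
    have h3 : ∑ i ∈ Finset.range m, VarK M A (k + (i+1)) ≤ ∑' j : ℕ, VarK M A (k + j) := by
      have h4 : ∑ i ∈ Finset.range m, VarK M A (k + (i+1))
          = ∑ i ∈ Finset.range (m+1), VarK M A (k + i) - VarK M A (k + 0) := by
        rw [Finset.sum_range_succ' (fun i => VarK M A (k + i)) m]; ring
      rw [h4]
      have h5 : ∑ i ∈ Finset.range (m+1), VarK M A (k + i) ≤ ∑' j : ℕ, VarK M A (k + j) :=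
        Summable.sum_le_tsum _ (fun i _ => VarK_nonneg A hvarbdd _ (by omega)) hg_summable
      have h6 : 0 ≤ VarK M A (k + 0) := VarK_nonneg A hvarbdd _ (by omega)
      linarith
    have hmem : birkhoff M A m w' - m * betaA M A ∈ uASet M A y := ⟨m, w', hσ', rfl⟩
    have h7 : birkhoff M A m w' - ↑m * betaA M A ≤ uA M A y :=
      le_csSup (hbddset y) hmem
    linarith
  have h8 : uA M A x ≤ uA M A y + ∑' j : ℕ, VarK M A (k + j) :=
    csSup_le ⟨0, zero_mem_uASet A x⟩ hstep
  linarith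

lemma tail_small (A : ShiftSpace M → ℝ)
    (hvarbdd : ∀ k : ℕ, 1 ≤ k →
      BddAbove {r : ℝ | ∃ x y : ShiftSpace M, Agree M k x y ∧ A x - A y = r})
    (ε : ℝ) (hε : 0 < ε) :
    ∃ k : ℕ, 1 ≤ k ∧ ∑' j : ℕ, VarK M A (k + j) ≤ ε := by
  have ht := tendsto_sum_nat_add (fun j => VarK M A (j+1))
  rw [Metric.tendsto_atTop] at ht
  obtain ⟨N, hN⟩ := ht ε hε
  refine ⟨N+1, by omega, ?_⟩
  have hd := hN N le_rfl
  rw [Real.dist_eq, sub_zero] at hd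
  have he : ∑' j : ℕ, VarK M A (N+1+j) = ∑' j : ℕ, VarK M A ((j+N)+1) := by
    apply tsum_congr
    intro j; congr 1; omega
  calc ∑' j : ℕ, VarK M A (N+1+j) = ∑' j : ℕ, VarK M A ((j+N)+1) := he
    _ ≤ |∑' (j : ℕ), VarK M A ((j+N)+1)| := le_abs_self _
    _ ≤ ε := hd.le

end UAProof

/-- for a bounded above potential with summable variations and
`inf A|_{⋃_{i∈F}[i]} > -∞`, the function `u_A` is a minimal, nonnegative, bounded
sub-action with `Var_k(u_A) ≤ ∑_{j ≥ k} Var_j(A)` for all `k ≥ 1`; in particular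
`u_A` is uniformly continuous. -/
theorem uA_summable_variations
    (M : ℕ → ℕ → Bool) (F : Set ℕ) (K₀ : ℕ)
    (hprim : Primitive M F K₀)
    (A : ShiftSpace M → ℝ)
    (hbdd : BddAbove (Set.range A))
    (hbelow : BddBelow (A '' FCyl M F))
    (hvarbdd : ∀ k : ℕ, 1 ≤ k → BddAbove {r : ℝ | ∃ x y : ShiftSpace M, Agree M k x y ∧ A x - A y = r})
    (hsum : Summable (fun k : ℕ => VarK M A (k + 1))) :
    (∀ x, 0 ≤ uA M A x) ∧
    BddAbove (Set.range (uA M A)) ∧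
    Continuous (uA M A) ∧
    (∀ x, A x + uA M A x - uA M A (shiftMap M x) ≤ betaA M A) ∧
    (∀ v : ShiftSpace M → ℝ, Continuous v → (∀ x, 0 ≤ v x) →
      (∀ x, A x + v x - v (shiftMap M x) ≤ betaA M A) → ∀ x, uA M A x ≤ v x) ∧
    (∀ k : ℕ, 1 ≤ k → ∀ x y : ShiftSpace M, Agree M k x y →
      uA M A x - uA M A y ≤ ∑' j : ℕ, VarK M A (k + j)) ∧
    (∀ ε : ℝ, 0 < ε → ∃ k : ℕ, ∀ x y : ShiftSpace M, Agree M k x y →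
      |uA M A x - uA M A y| ≤ ε) := by
  classical
  have hbddset : ∀ x : ShiftSpace M, BddAbove (uASet M A x) := fun x =>
    ⟨_, UAProof.uASet_le F K₀ hprim A hbdd hbelow hvarbdd hsum x⟩
  have h1 : ∀ x, 0 ≤ uA M A x := fun x =>
    le_csSup (hbddset x) (UAProof.zero_mem_uASet A x)
  have h2 : BddAbove (Set.range (uA M A)) := by
    refine ⟨max 0 (K₀ * (betaA M A - infF M F A) + VarSum M A), ?_⟩
    rintro r ⟨x, rfl⟩
    exact csSup_le ⟨0, UAProof.zero_mem_uASet A x⟩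
      (UAProof.uASet_le F K₀ hprim A hbdd hbelow hvarbdd hsum x)
  have h6 : ∀ k : ℕ, 1 ≤ k → ∀ x y : ShiftSpace M, Agree M k x y →
      uA M A x - uA M A y ≤ ∑' j : ℕ, VarK M A (k + j) :=
    fun k hk x y hxy => UAProof.item6 A hvarbdd hsum hbddset k hk x y hxy
  have h7 : ∀ ε : ℝ, 0 < ε → ∃ k : ℕ, ∀ x y : ShiftSpace M, Agree M k x y →
      |uA M A x - uA M A y| ≤ ε := by
    intro ε hε
    obtain ⟨k, hk1, hk⟩ := UAProof.tail_small A hvarbdd ε hε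
    refine ⟨k, fun x y hxy => abs_le.2 ⟨?_, le_trans (h6 k hk1 x y hxy) hk⟩⟩
    have := le_trans (h6 k hk1 y x (fun j hj => (hxy j hj).symm)) hk
    linarith
  have h3 : Continuous (uA M A) := by
    rw [continuous_iff_continuousAt]
    intro x
    rw [ContinuousAt, Metric.tendsto_nhds]
    intro ε hε
    obtain ⟨k, hk1, hk⟩ := UAProof.tail_small A hvarbdd (ε/2) (by linarith)
    have hUopen : IsOpen {y : ShiftSpace M | Agree M k x y} := by
      have he : {y : ShiftSpace M | Agree M k x y}
          = ⋂ j ∈ Finset.range k, {y : ShiftSpace M | y.1 j = x.1 j} := by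
        ext y
        simp only [Set.mem_setOf_eq, Set.mem_iInter, Finset.mem_range]
        exact ⟨fun h j hj => (h j hj).symm, fun h j hj => (h j hj).symm⟩
      rw [he]
      refine isOpen_biInter_finset fun j _ => ?_
      have hc : Continuous fun y : ShiftSpace M => y.1 j :=
        (continuous_apply j).comp continuous_subtype_val
      exact hc.isOpen_preimage {x.1 j} (isOpen_discrete _)
    have hmemU : x ∈ {y : ShiftSpace M | Agree M k x y} := fun j hj => rfl
    filter_upwards [hUopen.mem_nhds hmemU] with y hy
    rw [Real.dist_eq]
    have ha := le_trans (h6 k hk1 y x (fun j hj => (hy j hj).symm)) hk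
    have hb := le_trans (h6 k hk1 x y hy) hk
    have habs : |uA M A y - uA M A x| ≤ ε/2 := abs_le.2 ⟨by linarith, ha⟩
    exact lt_of_le_of_lt habs (by linarith)
  have h4 : ∀ x, A x + uA M A x - uA M A (shiftMap M x) ≤ betaA M A := by
    intro x
    have hsub : ∀ r ∈ uASet M A x, r ≤ uA M A (shiftMap M x) - (A x - betaA M A) := by
      rintro r ⟨kk, y, hy, rfl⟩
      have hmem : (birkhoff M A kk y - kk * betaA M A) + (A x - betaA M A)
          ∈ uASet M A (shiftMap M x) := by
        refine ⟨kk+1, y, ?_, ?_⟩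
        · rw [Function.iterate_succ_apply', hy]
        · rw [UAProof.birkhoff_succ, hy]
          push_cast
          ring
      have hle : (birkhoff M A kk y - kk * betaA M A) + (A x - betaA M A)
          ≤ uA M A (shiftMap M x) := le_csSup (hbddset (shiftMap M x)) hmem
      linarith
    have hle2 : uA M A x ≤ uA M A (shiftMap M x) - (A x - betaA M A) :=
      csSup_le ⟨0, UAProof.zero_mem_uASet A x⟩ hsub
    linarith
  have h5 : ∀ v : ShiftSpace M → ℝ, Continuous v → (∀ x, 0 ≤ v x) →
      (∀ x, A x + v x - v (shiftMap M x) ≤ betaA M A) → ∀ x, uA M A x ≤ v x := by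
    intro v _ hv0 hsubv x
    refine csSup_le ⟨0, UAProof.zero_mem_uASet A x⟩ ?_
    rintro r ⟨kk, y, hy, rfl⟩
    have tele : ∀ m : ℕ, birkhoff M A m y - m * betaA M A ≤ v ((shiftMap M)^[m] y) - v y := by
      intro m
      induction m with
      | zero => simp [birkhoff]
      | succ m ih =>
        have hstep := hsubv ((shiftMap M)^[m] y)
        rw [UAProof.birkhoff_succ, Function.iterate_succ_apply']
        push_cast
        linarith
    have ht := tele kk
    rw [hy] at ht
    have hvy := hv0 y
    linarith
  exact ⟨h1, h2, h3, h4, h5, h6, h7⟩
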